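/- There is no function c : ℤ/2 × ℤ/2 → ℂˣ satisfying c(h,k) · c(g,h+k) · c(g,h)⁻¹ · c(g+h,k)⁻¹ = (−1)^{g·h·k} for all g,h,k ∈ ℤ/2, where (−1)^{g·h·k} denotes −1 if g = h = k = 1 and +1 otherwise. (The same holds with values restricted to the circle group U(1) ⊂ ℂˣ.) -/

import Mathlib

lemma stmt7_key : ¬∃ c : ZMod 2 → ZMod 2 → ℂˣ,
      ∀ g h k : ZMod 2,
        c h k * c g (h + k) * (c g h)⁻¹ * (c (g + h) k)⁻¹ =
          if g = 1 ∧ h = 1 ∧ k = 1 then -1 else 1 := by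
  rintro ⟨c, h⟩
  have h1 := congrArg Units.val (h 0 0 1)
  have h2 := congrArg Units.val (h 1 1 0)
  have h3 := congrArg Units.val (h 1 1 1)
  have e00 := (c 0 0).ne_zero
  have e01 := (c 0 1).ne_zero
  have e10 := (c 1 0).ne_zero
  have e11 := (c 1 1).ne_zero
  simp only [show ((0:ZMod 2)+0)=0 by decide, show ((0:ZMod 2)+1)=1 by decide,
    show ((1:ZMod 2)+1)=0 by decide, show ((1:ZMod 2)+0)=1 by decide,
    show ((0:ZMod 2) = 1) = False by simp, if_true, if_false, and_false, false_and,
    and_true, true_and, eq_self_iff_true, if_pos, Units.val_mul, Units.val_inv_eq_inv_val,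
    Units.val_one, Units.val_neg] at h1 h2 h3
  field_simp at h1 h2 h3
  exact e00 (by linear_combination (h3 - h2 - h1)/2)

/-- there is no `c : ℤ/2 × ℤ/2 → ℂˣ` with
`δc(g,h,k) = (−1)^{g·h·k}`; the same holds with values restricted to the
circle group `U(1) ⊂ ℂˣ` (i.e. units of absolute value 1). -/
theorem stmt7 :
    (¬∃ c : ZMod 2 → ZMod 2 → ℂˣ,
      ∀ g h k : ZMod 2,
        c h k * c g (h + k) * (c g h)⁻¹ * (c (g + h) k)⁻¹ =
          if g = 1 ∧ h = 1 ∧ k = 1 then -1 else 1) ∧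
    (¬∃ c : ZMod 2 → ZMod 2 → ℂˣ,
      (∀ g h : ZMod 2, ‖((c g h : ℂ))‖ = 1) ∧
      ∀ g h k : ZMod 2,
        c h k * c g (h + k) * (c g h)⁻¹ * (c (g + h) k)⁻¹ =
          if g = 1 ∧ h = 1 ∧ k = 1 then -1 else 1) := by
  exact ⟨stmt7_key, fun ⟨c, _, hc⟩ => stmt7_key ⟨c, hc⟩⟩
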